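/- Let t₁ = 2, t_n = t_{n−1}² − t_{n−1} + 1, and T' = conv{0, t₁e₁, …, t_de_d} ⊂ ℝ^d. For i ∈ {1,…,d} let G_i = conv{0, t₁e₁, …, t_ie_i}. Then vol_{ℤ^d}(G_i) = (t_{i+1} − 1)/i! ≥ (2^{2^{i−1}} − 1)/i! and |G_i ∩ ℤ^d| ≥ 2^{2^{i−2}}. -/

import Mathlib

open MeasureTheory

def corner (n : ℕ) (a : ℝ) : Set (Fin n → ℝ) :=
  {x | (∀ j, 0 ≤ x j) ∧ ∑ j, x j ≤ a}

lemma corner_isClosed (n : ℕ) (a : ℝ) : IsClosed (corner n a) := by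
  have h1 : IsClosed {x : Fin n → ℝ | ∀ j, 0 ≤ x j} := by
    have : {x : Fin n → ℝ | ∀ j, 0 ≤ x j} = ⋂ j, {x | 0 ≤ x j} :=
      by ext x; simp [Set.mem_iInter]
    rw [this]
    exact isClosed_iInter fun j => isClosed_le continuous_const (continuous_apply j)
  have h2 : IsClosed {x : Fin n → ℝ | ∑ j, x j ≤ a} :=
    isClosed_le (by continuity) continuous_const
  exact h1.inter h2

lemma corner_empty (n : ℕ) {a : ℝ} (ha : a < 0) : corner n a = ∅ := by
  ext x
  simp only [corner, Set.mem_setOf_eq, Set.mem_empty_iff_false, iff_false, not_and, not_le]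
  intro hx
  exact lt_of_lt_of_le ha (Finset.sum_nonneg fun j _ => hx j)

lemma mem_corner {n : ℕ} {a : ℝ} {x : Fin n → ℝ} :
    x ∈ corner n a ↔ (∀ j, 0 ≤ x j) ∧ ∑ j, x j ≤ a := Iff.rfl

lemma volume_corner : ∀ (n : ℕ) (a : ℝ), 0 ≤ a →
    volume (corner n a) = ENNReal.ofReal (a ^ n / n.factorial) := by
  intro n
  induction n with
  | zero =>
    intro a ha
    have : corner 0 a = Set.univ := by
      ext x; simp [corner, ha]
    rw [this, MeasureTheory.volume_pi, MeasureTheory.Measure.pi_univ]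
    simp
  | succ n ih =>
    intro a ha
    set e := MeasurableEquiv.piFinSuccAbove (fun _ : Fin (n+1) => ℝ) 0 with he
    set T : Set (ℝ × (Fin n → ℝ)) :=
      {p | 0 ≤ p.1 ∧ (∀ j, 0 ≤ p.2 j) ∧ p.1 + ∑ j, p.2 j ≤ a} with hT
    have hTm : MeasurableSet T := by
      have hT1 : T = {p : ℝ × (Fin n → ℝ) | 0 ≤ p.1} ∩
          ((⋂ j, {p : ℝ × (Fin n → ℝ) | 0 ≤ p.2 j}) ∩
          {p : ℝ × (Fin n → ℝ) | p.1 + ∑ j, p.2 j ≤ a}) := by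
        ext p
        simp only [hT, Set.mem_setOf_eq, Set.mem_inter_iff, Set.mem_iInter]
      rw [hT1]
      refine (measurableSet_le measurable_const measurable_fst).inter
        ((MeasurableSet.iInter fun j => measurableSet_le measurable_const
          ((measurable_pi_apply j).comp measurable_snd)).inter
          (measurableSet_le (measurable_fst.add (by fun_prop : Measurable fun p : ℝ × (Fin n → ℝ) => ∑ j, p.2 j)) measurable_const))
    have hpre : corner (n+1) a = e ⁻¹' T := by
      ext x
      simp only [corner, Set.mem_setOf_eq, Set.mem_preimage, he,
        MeasurableEquiv.piFinSuccAbove_apply, hT]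
      rw [Fin.sum_univ_succ]
      constructor
      · rintro ⟨h0, hs⟩
        exact ⟨h0 0, fun j => h0 _, by simpa [Fin.succAbove, Fin.tail] using hs⟩
      · rintro ⟨h0, h1, hs⟩
        refine ⟨fun j => ?_, by simpa [Fin.succAbove, Fin.tail] using hs⟩
        rcases Fin.eq_zero_or_eq_succ j with rfl | ⟨k, rfl⟩
        · exact h0
        · simpa [Fin.succAbove, Fin.tail] using h1 k
    have hmp := MeasureTheory.volume_preserving_piFinSuccAbove
      (fun _ : Fin (n+1) => ℝ) 0
    have hvol : volume (corner (n+1) a) = (volume : Measure (ℝ × (Fin n → ℝ))) T := by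
      rw [hpre]; exact hmp.measure_preimage hTm.nullMeasurableSet
    rw [hvol, MeasureTheory.Measure.volume_eq_prod, Measure.prod_apply hTm]
    have hslice : ∀ t : ℝ, volume (Prod.mk t ⁻¹' T) =
        Set.indicator (Set.Icc 0 a)
          (fun t => ENNReal.ofReal ((a - t) ^ n / n.factorial)) t := by
      intro t
      rcases le_or_gt 0 t with ht0 | ht0
      · have hPT : Prod.mk t ⁻¹' T = corner n (a - t) := by
          ext y
          simp only [Set.mem_preimage, hT, Set.mem_setOf_eq, mem_corner, ht0, true_and]
          constructor
          · rintro ⟨h1, h2⟩; exact ⟨h1, by linarith⟩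
          · rintro ⟨h1, h2⟩; exact ⟨h1, by linarith⟩
        rcases le_or_gt t a with hta | hta
        · rw [hPT, ih _ (by linarith), Set.indicator_of_mem (Set.mem_Icc.2 ⟨ht0, hta⟩)]
        · rw [hPT, corner_empty n (by linarith),
            Set.indicator_of_notMem (fun h => absurd h.2 (not_le.2 hta))]
          simp
      · have : Prod.mk t ⁻¹' T = ∅ := by
          ext y
          simp only [Set.mem_preimage, hT, Set.mem_setOf_eq, Set.mem_empty_iff_false,
            iff_false, not_and]
          intro h; linarith
        rw [this, Set.indicator_of_notMem (fun h => absurd h.1 (not_le.2 ht0))]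
        simp
    simp only [hslice]
    rw [lintegral_indicator measurableSet_Icc]
    have hcont : Continuous fun t : ℝ => (a - t) ^ n / (n.factorial : ℝ) := by
      fun_prop
    have hint : IntegrableOn (fun t : ℝ => (a - t) ^ n / (n.factorial : ℝ))
        (Set.Icc 0 a) volume := hcont.integrableOn_Icc
    rw [← MeasureTheory.ofReal_integral_eq_lintegral_ofReal hint]
    · congr 1
      rw [MeasureTheory.integral_Icc_eq_integral_Ioc,
        ← intervalIntegral.integral_of_le ha]
      rw [intervalIntegral.integral_comp_sub_left (fun s : ℝ => s ^ n / (n.factorial : ℝ)) a]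
      simp only [sub_zero, sub_self]
      rw [intervalIntegral.integral_div, integral_pow, Nat.factorial_succ]
      rw [zero_pow (by omega)]
      push_cast
      field_simp
      ring
    · refine (ae_restrict_iff' measurableSet_Icc).2 (Filter.Eventually.of_forall ?_)
      intro t ht
      have h1 : 0 ≤ a - t := by linarith [ht.2]
      positivity


/-- extension by zero as a linear map -/
def emb (i d : ℕ) : (Fin i → ℝ) →ₗ[ℝ] (Fin d → ℝ) where
  toFun x := fun j => if h : (j : ℕ) < i then x ⟨j, h⟩ else 0
  map_add' x y := by funext j; by_cases h : (j : ℕ) < i <;> simp [h]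
  map_smul' c x := by funext j; by_cases h : (j : ℕ) < i <;> simp [h]

lemma emb_apply (i d : ℕ) (x : Fin i → ℝ) (j : Fin d) :
    emb i d x j = if h : (j : ℕ) < i then x ⟨j, h⟩ else 0 := rfl

lemma emb_isometry (i d : ℕ) (hid : i ≤ d) : Isometry (emb i d) := by
  refine Isometry.of_dist_eq fun x y => ?_
  refine le_antisymm ?_ ?_
  · refine (dist_pi_le_iff dist_nonneg).2 fun j => ?_
    rcases lt_or_ge (j : ℕ) i with h | h
    · rw [emb_apply, emb_apply, dif_pos h, dif_pos h]
      exact dist_le_pi_dist x y ⟨j, h⟩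
    · rw [emb_apply, emb_apply, dif_neg (not_lt.2 h), dif_neg (not_lt.2 h)]
      simpa using dist_nonneg
  · refine (dist_pi_le_iff dist_nonneg).2 fun m => ?_
    have h : ((Fin.castLE hid m : Fin d) : ℕ) < i := by simp [m.isLt]
    have : x m = emb i d x (Fin.castLE hid m) ∧ y m = emb i d y (Fin.castLE hid m) := by
      rw [emb_apply, emb_apply, dif_pos h, dif_pos h]
      exact ⟨rfl, rfl⟩
    rw [this.1, this.2]
    exact dist_le_pi_dist _ _ _

/-- conv{0, e_1, ..., e_n} is the corner simplex -/
lemma convexHull_corner (n : ℕ) :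
    convexHull ℝ {x : Fin n → ℝ | x = 0 ∨ ∃ m : Fin n, x = Pi.single m 1}
      = corner n 1 := by
  apply Set.Subset.antisymm
  · refine convexHull_min ?_ ?_
    · rintro x (rfl | ⟨m, rfl⟩)
      · exact ⟨fun j => le_refl 0, by simp⟩
      · constructor
        · intro j
          rcases eq_or_ne j m with rfl | h
          · simp
          · simp [Pi.single_apply, h]
        · simp [Pi.single_apply]
    · rintro x ⟨hx1, hx2⟩ y ⟨hy1, hy2⟩ a b ha hb hab
      constructor
      · intro j
        have := hx1 j; have := hy1 j
        simp only [Pi.add_apply, Pi.smul_apply, smul_eq_mul]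
        nlinarith
      · simp only [Pi.add_apply, Pi.smul_apply, smul_eq_mul, Finset.sum_add_distrib,
          ← Finset.mul_sum]
        nlinarith
  · rintro x ⟨hx1, hx2⟩
    have hmem : ∀ m : Fin n, (Pi.single m 1 : Fin n → ℝ) ∈
        convexHull ℝ {x : Fin n → ℝ | x = 0 ∨ ∃ m : Fin n, x = Pi.single m 1} :=
      fun m => subset_convexHull ℝ _ (Or.inr ⟨m, rfl⟩)
    have h0 : (0 : Fin n → ℝ) ∈
        convexHull ℝ {x : Fin n → ℝ | x = 0 ∨ ∃ m : Fin n, x = Pi.single m 1} :=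
      subset_convexHull ℝ _ (Or.inl rfl)
    set w : Option (Fin n) → ℝ := fun o => o.elim (1 - ∑ j, x j) (fun m => x m) with hw
    set z : Option (Fin n) → (Fin n → ℝ) :=
      fun o => o.elim 0 (fun m => Pi.single m 1) with hz
    have key : x = ∑ o : Option (Fin n), w o • z o := by
      rw [Fintype.sum_option]
      funext j
      simp only [hw, hz, Option.elim, smul_zero, Pi.add_apply, Pi.zero_apply,
        Finset.sum_apply, Pi.smul_apply, Pi.single_apply, smul_eq_mul, mul_ite,
        mul_one, mul_zero]
      rw [Finset.sum_ite_eq Finset.univ j x]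
      simp
    rw [key]
    refine (convex_convexHull ℝ _).sum_mem ?_ ?_ ?_
    · rintro (_ | m) _
      · simpa [hw] using hx2
      · simpa [hw] using hx1 m
    · rw [Fintype.sum_option]
      simp [hw]
    · rintro (_ | m) _
      · exact h0
      · exact hmem m


section tlem
variable (t : ℕ → ℤ) (h1 : t 1 = 2)
  (hrec : ∀ n : ℕ, 2 ≤ n → t n = t (n - 1) ^ 2 - t (n - 1) + 1)
include h1 hrec

lemma t_ge_two : ∀ n, 1 ≤ n → 2 ≤ t n := by
  intro n hn
  induction n, hn using Nat.le_induction with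
  | base => omega
  | succ n hn ih =>
    have h := hrec (n + 1) (by omega)
    simp only [Nat.add_sub_cancel] at h
    nlinarith

lemma t_mono : ∀ m n, 1 ≤ m → m ≤ n → t m ≤ t n := by
  intro m n hm hmn
  induction n, hmn using Nat.le_induction with
  | base => exact le_refl _
  | succ n hn ih =>
    have h2 : 2 ≤ t n := t_ge_two t h1 hrec n (by omega)
    have h := hrec (n + 1) (by omega)
    simp only [Nat.add_sub_cancel] at h
    nlinarith

lemma t_prod : ∀ n, 1 ≤ n → (∏ m : Fin n, t ((m : ℕ) + 1)) = t (n + 1) - 1 := by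
  intro n hn
  induction n, hn using Nat.le_induction with
  | base =>
    have h := hrec 2 (by omega)
    simp only [show (2:ℕ) - 1 = 1 from rfl] at h
    simp [h1, h]
  | succ n hn ih =>
    rw [Fin.prod_univ_castSucc]
    have h := hrec (n + 2) (by omega)
    simp only [show n + 2 - 1 = n + 1 from rfl] at h
    simp only [Fin.coe_castSucc, Fin.val_last]
    rw [ih, h]
    ring

lemma t_lb : ∀ n, 2 ≤ n → 2 ^ (2 ^ (n - 2)) + 1 ≤ t n := by
  intro n hn
  induction n, hn using Nat.le_induction with
  | base =>
    have h := hrec 2 (by omega)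
    simp only [show (2:ℕ) - 1 = 1 from rfl] at h
    simp [h1] at h
    simp [h]
  | succ n hn ih =>
    have h := hrec (n + 1) (by omega)
    simp only [Nat.add_sub_cancel] at h
    have he : 2 ^ (n + 1 - 2) = 2 ^ (n - 2) * 2 := by
      rw [← pow_succ]
      congr 1
      omega
    have hp : (1:ℤ) ≤ 2 ^ 2 ^ (n - 2) := one_le_pow₀ (by norm_num)
    rw [he, pow_mul]
    nlinarith [ih, hp]

end tlem

lemma volume_diag_image (n : ℕ) (c : Fin n → ℝ) (s : Set (Fin n → ℝ)) :
    volume ((Matrix.toLin' (Matrix.diagonal c)) '' s)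
      = ENNReal.ofReal |∏ j, c j| * volume s := by
  rw [Measure.addHaar_image_linearMap, LinearMap.det_toLin', Matrix.det_diagonal]

lemma diag_apply (n : ℕ) (c x : Fin n → ℝ) (j : Fin n) :
    (Matrix.toLin' (Matrix.diagonal c)) x j = c j * x j := by
  rw [Matrix.toLin'_apply, Matrix.mulVec_diagonal]

theorem stmt15 (d : ℕ) (hd : 0 < d) (t : ℕ → ℤ) (h1 : t 1 = 2)
    (hrec : ∀ n : ℕ, 2 ≤ n → t n = t (n - 1) ^ 2 - t (n - 1) + 1)
    (i : ℕ) (hi : 1 ≤ i) (hid : i ≤ d)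
    (G : Set (Fin d → ℝ))
    (hG : G = convexHull ℝ {x : Fin d → ℝ | x = 0 ∨
      ∃ k : Fin d, (k : ℕ) < i ∧
        x = fun j => if j = k then ((t ((k : ℕ) + 1) : ℤ) : ℝ) else 0})
    (b : Fin i → Fin d → ℝ)
    (hb : b = fun (m : Fin i) => fun (j : Fin d) => if (j : ℕ) = (m : ℕ) then (1 : ℝ) else 0) :
    μH[(i : ℝ)] G =
      ENNReal.ofReal ((((t (i + 1) : ℤ) : ℝ) - 1) / (i.factorial : ℝ)) *
        μH[(i : ℝ)] (parallelepiped b) ∧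
    ENNReal.ofReal (((2 : ℝ) ^ (2 ^ (i - 1)) - 1) / (i.factorial : ℝ)) *
        μH[(i : ℝ)] (parallelepiped b) ≤ μH[(i : ℝ)] G ∧
    (2 : ℝ) ^ ((2 : ℝ) ^ ((i : ℝ) - 2)) ≤
      (Set.ncard {x : Fin d → ℤ | (fun j => ((x j : ℤ) : ℝ)) ∈ G} : ℝ) := by
  have h2t : ∀ n, 1 ≤ n → 2 ≤ t n := t_ge_two t h1 hrec
  have hmono : ∀ m n, 1 ≤ m → m ≤ n → t m ≤ t n := t_mono t h1 hrec
  set c : Fin i → ℝ := fun m => ((t ((m : ℕ) + 1) : ℤ) : ℝ) with hc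
  set L : (Fin i → ℝ) →ₗ[ℝ] (Fin i → ℝ) := Matrix.toLin' (Matrix.diagonal c) with hL
  -- image of the basis vertices
  have himg : ∀ m : Fin i, emb i d (L (Pi.single m 1)) =
      (fun j : Fin d => if j = Fin.castLE hid m then ((t ((m : ℕ) + 1) : ℤ) : ℝ) else 0) := by
    intro m
    funext j
    rw [emb_apply]
    by_cases h : (j : ℕ) < i
    · rw [dif_pos h, hL, diag_apply]
      rcases eq_or_ne ((j : ℕ)) ((m : ℕ)) with he | he
      · have e1 : (⟨(j : ℕ), h⟩ : Fin i) = m := Fin.ext he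
        have e2 : j = Fin.castLE hid m := Fin.ext he
        rw [e1, e2, if_pos rfl]
        simp [hc]
      · have e1 : (⟨(j : ℕ), h⟩ : Fin i) ≠ m := fun hh => he (congrArg Fin.val hh)
        have e2 : j ≠ Fin.castLE hid m := fun hh => he (congrArg Fin.val hh)
        rw [if_neg e2]
        simp [Pi.single_apply, e1]
    · rw [dif_neg h]
      have e2 : j ≠ Fin.castLE hid m := by
        intro hh
        exact h (by rw [hh]; simpa using m.isLt)
      rw [if_neg e2]
  -- the vertex set of G
  have hV : {x : Fin d → ℝ | x = 0 ∨ ∃ k : Fin d, (k : ℕ) < i ∧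
        x = fun j => if j = k then ((t ((k : ℕ) + 1) : ℤ) : ℝ) else 0}
      = emb i d '' (L '' {x : Fin i → ℝ | x = 0 ∨ ∃ m : Fin i, x = Pi.single m 1}) := by
    ext x
    simp only [Set.mem_setOf_eq, Set.mem_image]
    constructor
    · rintro (rfl | ⟨k, hk, rfl⟩)
      · exact ⟨0, ⟨0, Or.inl rfl, map_zero L⟩, map_zero _⟩
      · refine ⟨L (Pi.single ⟨(k : ℕ), hk⟩ 1), ⟨_, Or.inr ⟨_, rfl⟩, rfl⟩, ?_⟩
        rw [himg]
        have : Fin.castLE hid (⟨(k : ℕ), hk⟩ : Fin i) = k := Fin.ext rfl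
        rw [this]
    · rintro ⟨y, ⟨w, hw, rfl⟩, rfl⟩
      rcases hw with rfl | ⟨m, rfl⟩
      · left; rw [map_zero, map_zero]
      · right
        exact ⟨Fin.castLE hid m, by simpa using m.isLt, himg m⟩
  have hG2 : G = emb i d '' (L '' corner i 1) := by
    rw [hG, hV, ← LinearMap.image_convexHull, ← LinearMap.image_convexHull,
      convexHull_corner]
  -- Hausdorff measure of images under emb = Lebesgue volume
  have hiso := emb_isometry i d hid
  have hμpi : (μH[(i : ℝ)] : Measure (Fin i → ℝ)) = volume := by
    have h := MeasureTheory.hausdorffMeasure_pi_real (ι := Fin i)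
    simpa [Fintype.card_fin] using h
  have himg_meas : ∀ s : Set (Fin i → ℝ),
      μH[(i : ℝ)] (emb i d '' s) = volume s := by
    intro s
    rw [hiso.hausdorffMeasure_image (Or.inl (Nat.cast_nonneg i)), hμpi]
  -- product of the scalings
  have hprod : (∏ m : Fin i, c m) = ((t (i + 1) : ℤ) : ℝ) - 1 := by
    have h := t_prod t h1 hrec i hi
    have h2 : ((∏ m : Fin i, t ((m : ℕ) + 1) : ℤ) : ℝ) = ((t (i + 1) : ℤ) : ℝ) - 1 := by
      rw [h]; push_cast; ring
    rw [← h2]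
    push_cast
    rfl
  have hprod_nonneg : 0 ≤ ∏ m : Fin i, c m :=
    Finset.prod_nonneg fun m _ => by
      have := h2t ((m : ℕ) + 1) (by omega)
      simp only [hc]
      exact_mod_cast by linarith
  have hti1 : (2 : ℤ) ≤ t (i + 1) := h2t (i + 1) (by omega)
  -- the Hausdorff measure of G
  have hμG : μH[(i : ℝ)] G =
      ENNReal.ofReal ((((t (i + 1) : ℤ) : ℝ) - 1) / (i.factorial : ℝ)) := by
    rw [hG2, himg_meas, hL, volume_diag_image, volume_corner i 1 zero_le_one,
      abs_of_nonneg hprod_nonneg, hprod, ← ENNReal.ofReal_mul (by exact_mod_cast by linarith)]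
    congr 1
    rw [one_pow]
    ring
  -- the parallelepiped is the image of the unit cube
  have himg2 : (fun y : Fin i → ℝ => ∑ m, y m • b m) = emb i d := by
    funext y
    funext j
    simp only [hb, Finset.sum_apply, Pi.smul_apply, smul_eq_mul, emb_apply]
    by_cases h : (j : ℕ) < i
    · rw [dif_pos h]
      rw [Finset.sum_eq_single (⟨(j : ℕ), h⟩ : Fin i)]
      · simp
      · intro m _ hm
        have : (j : ℕ) ≠ (m : ℕ) := fun hh => hm (Fin.ext hh.symm)
        simp [this]
      · intro hmem; exact absurd (Finset.mem_univ _) hmem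
    · rw [dif_neg h]
      refine Finset.sum_eq_zero fun m _ => ?_
      have : (j : ℕ) ≠ (m : ℕ) := fun hh => h (hh ▸ m.isLt)
      simp [this]
  have hμP : μH[(i : ℝ)] (parallelepiped b) = 1 := by
    have hpar : parallelepiped b = emb i d '' Set.Icc 0 1 := by
      unfold parallelepiped
      rw [himg2]
    rw [hpar, himg_meas, Real.volume_Icc_pi]
    simp
  refine ⟨by rw [hμG, hμP, mul_one], ?_, ?_⟩
  · -- second claim
    rw [hμG, hμP, mul_one]
    apply ENNReal.ofReal_le_ofReal
    have hlb := t_lb t h1 hrec (i + 1) (by omega)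
    have he : i + 1 - 2 = i - 1 := by omega
    rw [he] at hlb
    have h2r : ((2 : ℤ) ^ (2 ^ (i - 1)) : ℝ) = (2 : ℝ) ^ (2 ^ (i - 1)) := by push_cast; rfl
    have hZ : (2 : ℤ) ^ (2 ^ (i - 1)) ≤ t (i + 1) := by linarith
    have hR : ((2 : ℤ) ^ (2 ^ (i - 1)) : ℝ) ≤ ((t (i + 1) : ℤ) : ℝ) := by exact_mod_cast hZ
    rw [h2r] at hR
    have hfac : (0 : ℝ) ≤ (i.factorial : ℝ) := by positivity
    exact div_le_div_of_nonneg_right (by linarith) hfac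
  · -- counting claim
    set k0 : Fin d := ⟨i - 1, by omega⟩ with hk0
    have hk0v : ((k0 : Fin d) : ℕ) = i - 1 := rfl
    have hk0i : ((k0 : Fin d) : ℕ) + 1 = i := by omega
    have hti2 : (2 : ℤ) ≤ t i := h2t i hi
    have htiR : (2 : ℝ) ≤ ((t i : ℤ) : ℝ) := by exact_mod_cast hti2
    -- vertex v and 0 are in G
    have h0G : (0 : Fin d → ℝ) ∈ G := by
      rw [hG]; exact subset_convexHull ℝ _ (Or.inl rfl)
    have hvG : (fun j : Fin d => if j = k0 then ((t i : ℤ) : ℝ) else 0) ∈ G := by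
      rw [hG]
      refine subset_convexHull ℝ _ (Or.inr ⟨k0, by omega, ?_⟩)
      rw [hk0i]
    -- all the integer points on the segment
    have hsub : ∀ k : ℤ, 0 ≤ k → k ≤ t i →
        (fun j : Fin d => if j = k0 then k else 0) ∈
          {x : Fin d → ℤ | (fun j => ((x j : ℤ) : ℝ)) ∈ G} := by
      intro k hk0' hkt
      have htpos : (0 : ℝ) < ((t i : ℤ) : ℝ) := by linarith
      have hkR : (0 : ℝ) ≤ (k : ℝ) := by exact_mod_cast hk0'
      have hktR : (k : ℝ) ≤ ((t i : ℤ) : ℝ) := by exact_mod_cast hkt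
      have heq : (fun j : Fin d => (((if j = k0 then k else 0) : ℤ) : ℝ)) =
          (1 - (k : ℝ) / ((t i : ℤ) : ℝ)) • (0 : Fin d → ℝ) +
            ((k : ℝ) / ((t i : ℤ) : ℝ)) •
              (fun j : Fin d => if j = k0 then ((t i : ℤ) : ℝ) else 0) := by
        funext j
        by_cases h : j = k0
        · simp only [h, if_pos rfl, Pi.add_apply, Pi.smul_apply, Pi.zero_apply,
            smul_eq_mul, mul_zero, zero_add, if_pos rfl, ↓reduceIte]
          field_simp
        · simp [h]
      show (fun j : Fin d => (((if j = k0 then k else 0) : ℤ) : ℝ)) ∈ G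
      rw [heq]
      have hconv : Convex ℝ G := by rw [hG]; exact convex_convexHull ℝ _
      have ha : 0 ≤ 1 - (k : ℝ) / ((t i : ℤ) : ℝ) := by
        rw [sub_nonneg, div_le_one htpos]
        exact hktR
      have hbn : 0 ≤ (k : ℝ) / ((t i : ℤ) : ℝ) := div_nonneg hkR htpos.le
      refine hconv h0G hvG ha hbn (by ring)
    -- G is bounded in the box [0, t i]^d
    have hbox : G ⊆ {y : Fin d → ℝ | ∀ j, y j ∈ Set.Icc (0 : ℝ) ((t i : ℤ) : ℝ)} := by
      rw [hG]
      refine convexHull_min ?_ ?_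
      · rintro x (rfl | ⟨k, hk, rfl⟩)
        · intro j
          simp only [Pi.zero_apply, Set.mem_Icc, le_refl, true_and]
          linarith [htiR]
        · intro j
          simp only [Set.mem_Icc]
          have h1' : t ((k : ℕ) + 1) ≤ t i := hmono ((k : ℕ) + 1) i (by omega) (by omega)
          have h2' : (2 : ℤ) ≤ t ((k : ℕ) + 1) := h2t _ (by omega)
          have h1R : ((t ((k : ℕ) + 1) : ℤ) : ℝ) ≤ ((t i : ℤ) : ℝ) := by exact_mod_cast h1'
          have h2R : (2 : ℝ) ≤ ((t ((k : ℕ) + 1) : ℤ) : ℝ) := by exact_mod_cast h2'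
          by_cases h : j = k
          · rw [if_pos h]
            exact ⟨by linarith, h1R⟩
          · rw [if_neg h]
            exact ⟨le_refl 0, by linarith [htiR]⟩
      · have : {y : Fin d → ℝ | ∀ j, y j ∈ Set.Icc (0 : ℝ) ((t i : ℤ) : ℝ)}
            = Set.pi Set.univ (fun _ : Fin d => Set.Icc (0 : ℝ) ((t i : ℤ) : ℝ)) := by
          ext y; simp [Set.mem_pi, Pi.le_def, forall_and]
        rw [this]
        exact convex_pi fun _ _ => convex_Icc _ _
    -- finiteness of the lattice points
    have hSfin : {x : Fin d → ℤ | (fun j => ((x j : ℤ) : ℝ)) ∈ G}.Finite := by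
      refine Set.Finite.subset
        (Set.Finite.pi (fun _ : Fin d => Set.finite_Icc (0 : ℤ) (t i))) ?_
      intro x hx
      have := hbox hx
      refine Set.mem_pi.2 fun j _ => ?_
      have hj := this j
      have h1' : (0 : ℝ) ≤ ((x j : ℤ) : ℝ) := hj.1
      have h2' : ((x j : ℤ) : ℝ) ≤ ((t i : ℤ) : ℝ) := hj.2
      exact ⟨by exact_mod_cast h1', by exact_mod_cast h2'⟩
    -- the injection
    set g : ℤ → (Fin d → ℤ) := fun k => fun j => if j = k0 then k else 0 with hg
    have hginj : Function.Injective g := by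
      intro k1 k2 h
      have := congrFun h k0
      simpa [hg] using this
    have hA_sub : g '' Set.Icc (0 : ℤ) (t i) ⊆
        {x : Fin d → ℤ | (fun j => ((x j : ℤ) : ℝ)) ∈ G} := by
      rintro _ ⟨k, ⟨hk1, hk2⟩, rfl⟩
      exact hsub k hk1 hk2
    have hcard : (g '' Set.Icc (0 : ℤ) (t i)).ncard = (t i + 1).toNat := by
      rw [Set.ncard_image_of_injective _ hginj, ← Finset.coe_Icc, Set.ncard_coe_finset,
        Int.card_Icc]
      congr 1
      ring
    have hle : (t i + 1).toNat ≤
        {x : Fin d → ℤ | (fun j => ((x j : ℤ) : ℝ)) ∈ G}.ncard := by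
      rw [← hcard]
      exact Set.ncard_le_ncard hA_sub hSfin
    have hleR : ((t i : ℤ) : ℝ) + 1 ≤
        ({x : Fin d → ℤ | (fun j => ((x j : ℤ) : ℝ)) ∈ G}.ncard : ℝ) := by
      have h1' : (((t i + 1).toNat : ℤ) : ℝ) = ((t i : ℤ) : ℝ) + 1 := by
        rw [Int.toNat_of_nonneg (by linarith)]
        push_cast; ring
      calc ((t i : ℤ) : ℝ) + 1 = (((t i + 1).toNat : ℤ) : ℝ) := h1'.symm
        _ ≤ _ := by exact_mod_cast hle
    -- conclude
    rcases eq_or_lt_of_le hi with h1i | h2i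
    · -- i = 1
      have : i = 1 := h1i.symm
      subst this
      have hlhs : (2 : ℝ) ^ ((2 : ℝ) ^ (((1 : ℕ) : ℝ) - 2)) ≤ 2 := by
        calc (2 : ℝ) ^ ((2 : ℝ) ^ (((1 : ℕ) : ℝ) - 2))
            ≤ (2 : ℝ) ^ (1 : ℝ) := by
              apply Real.rpow_le_rpow_of_exponent_le (by norm_num)
              have : ((1 : ℕ) : ℝ) - 2 = (-1 : ℝ) := by norm_num
              rw [this, Real.rpow_neg_one]
              norm_num
          _ = 2 := Real.rpow_one 2
      calc (2 : ℝ) ^ ((2 : ℝ) ^ (((1 : ℕ) : ℝ) - 2)) ≤ 2 := hlhs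
        _ ≤ ((t 1 : ℤ) : ℝ) + 1 := by rw [h1]; norm_num
        _ ≤ _ := hleR
    · -- i ≥ 2
      have hi2 : 2 ≤ i := h2i
      have hlb := t_lb t h1 hrec i hi2
      have hexp : (2 : ℝ) ^ ((2 : ℝ) ^ ((i : ℝ) - 2)) = (2 : ℝ) ^ ((2 : ℕ) ^ (i - 2)) := by
        have e1 : (i : ℝ) - 2 = ((i - 2 : ℕ) : ℝ) := by
          have : ((i - 2 : ℕ) : ℝ) = (i : ℝ) - 2 := by
            push_cast [Nat.cast_sub hi2]
            ring
          linarith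
        rw [e1, Real.rpow_natCast (2 : ℝ) (i - 2)]
        have e2 : ((2 : ℝ) ^ (i - 2) : ℝ) = (((2 : ℕ) ^ (i - 2) : ℕ) : ℝ) := by
          push_cast; ring
        rw [e2, Real.rpow_natCast]
      rw [hexp]
      have hcast : ((2 : ℤ) ^ (2 ^ (i - 2)) : ℝ) = (2 : ℝ) ^ ((2 : ℕ) ^ (i - 2)) := by
        push_cast; rfl
      have : (2 : ℝ) ^ ((2 : ℕ) ^ (i - 2)) + 1 ≤ ((t i : ℤ) : ℝ) := by
        rw [← hcast]
        exact_mod_cast hlb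
      linarith
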